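/- Fix h : ℕ, k ≥ 1, and intervals x_1, …, x_k with x_j = {m ∈ ℕ : a_j ≤ m < b_j} where a_j < b_j ≤ 2^h. Let p be a natural number with p ∈ ⋂_{j ∈ [k]} x_j. Then there is exactly one tuple (u_1, …, u_k) of bitstrings such that for every j ∈ [k], u_j ∈ CP_h(a_j, b_j) and p ∈ seg_h(u_j). -/

import Mathlib

/-- The value of a bitstring (most significant bit first):
`val [] = 0` and `val (u ++ [b]) = 2 * val u + (if b then 1 else 0)`. -/
def bitVal (u : List Bool) : ℕ :=
  u.foldl (fun n b => 2 * n + (if b then 1 else 0)) 0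

/-- The segment of a bitstring `u` (with `|u| ≤ h`) in the perfect segment tree of
height `h`: `seg_h(u) = {m : val u · 2^(h−|u|) ≤ m < (val u + 1) · 2^(h−|u|)}`. -/
def seg (h : ℕ) (u : List Bool) : Set ℕ :=
  {m | bitVal u * 2 ^ (h - u.length) ≤ m ∧ m < (bitVal u + 1) * 2 ^ (h - u.length)}

/-- The canonical partition `CP_h(a, b)` of the interval `{m : a ≤ m < b}` in the
perfect segment tree of height `h`: the bitstrings `u` with `|u| ≤ h` whose segment is
contained in `[a, b)` and such that no proper prefix of `u` has its segment contained
in `[a, b)`. -/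
def CP (h a b : ℕ) : Set (List Bool) :=
  {u | u.length ≤ h ∧ seg h u ⊆ Set.Ico a b ∧
    ∀ u' : List Bool, u' <+: u → u' ≠ u → ¬ seg h u' ⊆ Set.Ico a b}

/-- Fix `h`, `k ≥ 1`, and intervals `x j = {m : a j ≤ m < b j}` with
`a j < b j ≤ 2^h`. If the point `p` lies in every `x j`, then there is exactly one
tuple `(u 1, …, u k)` of bitstrings such that `u j ∈ CP_h(a j, b j)` and
`p ∈ seg_h(u j)` for every `j`. -/
lemma bitVal_shift (w : List Bool) (n : ℕ) :
    w.foldl (fun n b => 2 * n + (if b then 1 else 0)) n = n * 2 ^ w.length + bitVal w := by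
  induction w generalizing n with
  | nil => simp [bitVal]
  | cons b w ih =>
    simp only [List.foldl_cons, List.length_cons, bitVal, Nat.mul_zero, Nat.zero_add]
    rw [ih, ih (if b then 1 else 0)]
    ring

lemma bitVal_cons (b : Bool) (w : List Bool) :
    bitVal (b :: w) = (if b then 1 else 0) * 2 ^ w.length + bitVal w := by
  rw [bitVal, List.foldl_cons, bitVal_shift]
  norm_num

lemma bitVal_append (u w : List Bool) :
    bitVal (u ++ w) = bitVal u * 2 ^ w.length + bitVal w := by
  rw [bitVal, List.foldl_append, bitVal_shift]
  rfl

lemma bitVal_lt (u : List Bool) : bitVal u < 2 ^ u.length := by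
  induction u with
  | nil => simp [bitVal]
  | cons b w ih =>
    rw [bitVal_cons, List.length_cons, pow_succ]
    cases b <;> simp <;> omega

def toBits : ℕ → ℕ → List Bool
  | 0, _ => []
  | (l+1), q => toBits l (q / 2) ++ [q % 2 == 1]

lemma toBits_length (l q : ℕ) : (toBits l q).length = l := by
  induction l generalizing q with
  | zero => simp [toBits]
  | succ l ih => simp [toBits, ih]

lemma bitVal_singleton (b : Bool) : bitVal [b] = (if b then 1 else 0) := by
  cases b <;> simp [bitVal]

lemma bitVal_toBits (l q : ℕ) (hq : q < 2 ^ l) : bitVal (toBits l q) = q := by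
  induction l generalizing q with
  | zero => interval_cases q; simp [toBits, bitVal]
  | succ l ih =>
    have hdiv : q / 2 < 2 ^ l := by
      rw [Nat.div_lt_iff_lt_mul (show 0 < 2 by norm_num)]
      rw [pow_succ] at hq; omega
    rw [toBits, bitVal_append, ih _ hdiv, bitVal_singleton]
    simp only [List.length_singleton]
    have h2 : q % 2 < 2 := Nat.mod_lt _ (by norm_num)
    have hq2 : 2 * (q / 2) + q % 2 = q := Nat.div_add_mod q 2
    interval_cases h : q % 2 <;> simp [h] <;> omega

lemma toBits_bitVal (u : List Bool) : toBits u.length (bitVal u) = u := by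
  induction u using List.reverseRecOn with
  | nil => simp [toBits]
  | append_singleton w b ih =>
    rw [bitVal_append, bitVal_singleton]
    simp only [List.length_append, List.length_singleton, toBits]
    have h1 : (bitVal w * 2 ^ 1 + if b then 1 else 0) / 2 = bitVal w := by
      cases b <;> simp <;> omega
    have h2 : ((bitVal w * 2 ^ 1 + if b then 1 else 0) % 2 == 1) = b := by
      cases b <;> simp [pow_succ, Nat.mul_comm, Nat.mul_add_mod] <;> omega
    rw [h1, h2, ih]

lemma mem_seg_iff (h : ℕ) (u : List Bool) (p : ℕ) :
    p ∈ seg h u ↔ p / 2 ^ (h - u.length) = bitVal u := by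
  constructor
  · rintro ⟨h1, h2⟩
    exact Nat.div_eq_of_lt_le h1 h2
  · intro hq
    rw [seg, Set.mem_setOf_eq, ← hq]
    refine ⟨Nat.div_mul_le_self _ _, ?_⟩
    have hc : 0 < 2 ^ (h - u.length) := Nat.pow_pos two_pos
    rw [Nat.add_mul, Nat.one_mul]
    have h1 := Nat.div_add_mod' p (2 ^ (h - u.length))
    have h2 : p % 2 ^ (h - u.length) < 2 ^ (h - u.length) := Nat.mod_lt _ hc
    generalize p / 2 ^ (h - u.length) * 2 ^ (h - u.length) = q at h1 ⊢
    omega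

lemma seg_anti (h : ℕ) {u v : List Bool} (huv : u <+: v) (hv : v.length ≤ h) :
    seg h v ⊆ seg h u := by
  obtain ⟨w, rfl⟩ := huv
  intro m hm
  obtain ⟨h1, h2⟩ := hm
  rw [bitVal_append, List.length_append] at h1 h2
  have hlw : bitVal w < 2 ^ w.length := bitVal_lt w
  have hsplit : h - u.length = (h - (u.length + w.length)) + w.length := by
    rw [List.length_append] at hv; omega
  constructor
  · calc bitVal u * 2 ^ (h - u.length)
        = bitVal u * 2 ^ w.length * 2 ^ (h - (u.length + w.length)) := by
          rw [hsplit, pow_add]; ring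
      _ ≤ (bitVal u * 2 ^ w.length + bitVal w) * 2 ^ (h - (u.length + w.length)) :=
          Nat.mul_le_mul_right _ (by omega)
      _ ≤ m := h1
  · calc m < (bitVal u * 2 ^ w.length + bitVal w + 1) * 2 ^ (h - (u.length + w.length)) := h2
      _ ≤ (bitVal u + 1) * 2 ^ w.length * 2 ^ (h - (u.length + w.length)) := by
          apply Nat.mul_le_mul_right
          have : (bitVal u + 1) * 2 ^ w.length = bitVal u * 2 ^ w.length + 2 ^ w.length := by ring
          omega
      _ = (bitVal u + 1) * 2 ^ (h - u.length) := by rw [hsplit, pow_add]; ring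

/-- a string of length ≤ h whose segment contains p is the canonical one. -/
lemma eq_canon {h p : ℕ} {u : List Bool} (hu : u.length ≤ h) (hpu : p ∈ seg h u) :
    u = toBits u.length (p / 2 ^ (h - u.length)) := by
  rw [mem_seg_iff] at hpu
  rw [hpu, toBits_bitVal]

lemma cp_unique {h a b p : ℕ} {u v : List Bool} (hu : u ∈ CP h a b) (hv : v ∈ CP h a b)
    (hpu : p ∈ seg h u) (hpv : p ∈ seg h v) (hlen : u.length ≤ v.length) : u = v := by
  obtain ⟨hu1, hu2, hu3⟩ := hu
  obtain ⟨hv1, hv2, hv3⟩ := hv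
  have htake : (v.take u.length) <+: v := List.take_prefix _ _
  have hlt : (v.take u.length).length = u.length := by simp [hlen]
  have hpw : p ∈ seg h (v.take u.length) := seg_anti h htake hv1 hpv
  have e2 := eq_canon (by omega : (v.take u.length).length ≤ h) hpw
  rw [hlt] at e2
  have : u = v.take u.length := (eq_canon hu1 hpu).trans e2.symm
  rw [this] at hpu hu2 ⊢
  by_contra hne
  exact hv3 _ htake hne hu2

/-- the canonical level-`l` ancestor of leaf `p`. -/
def cBits (h p l : ℕ) : List Bool := toBits l (p / 2 ^ (h - l))

lemma cBits_length (h p l : ℕ) : (cBits h p l).length = l := toBits_length _ _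

lemma cBits_val (h p l : ℕ) (hl : l ≤ h) (hph : p < 2 ^ h) :
    bitVal (cBits h p l) = p / 2 ^ (h - l) := by
  apply bitVal_toBits
  rw [Nat.div_lt_iff_lt_mul (Nat.pow_pos two_pos), ← pow_add]
  have : h - l + l = h := by omega
  rw [Nat.add_comm, this]
  exact hph

lemma mem_seg_cBits (h p l : ℕ) (hl : l ≤ h) (hph : p < 2 ^ h) :
    p ∈ seg h (cBits h p l) := by
  rw [mem_seg_iff, cBits_length, cBits_val h p l hl hph]


theorem unique_tuple_of_canonical_nodes_containing_point
    (h k : ℕ) (hk : 1 ≤ k) (a b : Fin k → ℕ)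
    (hab : ∀ j, a j < b j) (hb : ∀ j, b j ≤ 2 ^ h)
    (p : ℕ) (hp : ∀ j : Fin k, p ∈ Set.Ico (a j) (b j)) :
    ∃! u : Fin k → List Bool,
      ∀ j : Fin k, u j ∈ CP h (a j) (b j) ∧ p ∈ seg h (u j) := by
  classical
  have hph : p < 2 ^ h := lt_of_lt_of_le (hp ⟨0, hk⟩).2 (hb _)
  have hex : ∀ j : Fin k, ∃ l, l ≤ h ∧ seg h (cBits h p l) ⊆ Set.Ico (a j) (b j) := by
    intro j
    refine ⟨h, le_refl _, ?_⟩
    intro m hm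
    obtain ⟨h1, h2⟩ := hm
    simp only [cBits_length, cBits_val h p h (le_refl _) hph, Nat.sub_self, pow_zero,
      Nat.mul_one, Nat.div_one] at h1 h2
    have : m = p := by omega
    rw [this]
    exact hp j
  refine ⟨fun j => cBits h p (Nat.find (hex j)), fun j => ?_, fun v hv => ?_⟩
  · obtain ⟨hl, hsub⟩ := Nat.find_spec (hex j)
    refine ⟨⟨by rw [cBits_length]; exact hl, hsub, ?_⟩, mem_seg_cBits h p _ hl hph⟩
    intro u' hpre hne hsub'
    have hlt : u'.length < Nat.find (hex j) := by
      have h1 := hpre.length_le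
      rw [cBits_length] at h1
      rcases Nat.lt_or_ge u'.length (Nat.find (hex j)) with h2 | h2
      · exact h2
      · exact absurd (hpre.eq_of_length (by rw [cBits_length]; omega)) hne
    have hu'h : u'.length ≤ h := by omega
    have hpu' : p ∈ seg h u' :=
      seg_anti h hpre (by rw [cBits_length]; exact hl) (mem_seg_cBits h p _ hl hph)
    have heq : u' = cBits h p u'.length := eq_canon hu'h hpu'
    have hmin := Nat.find_min (hex j) hlt
    rw [heq] at hsub'
    exact hmin ⟨hu'h, hsub'⟩
  · funext j
    have h1 := hv j
    obtain ⟨hl, hsub⟩ := Nat.find_spec (hex j)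
    have h2 : cBits h p (Nat.find (hex j)) ∈ CP h (a j) (b j) := by
      refine ⟨by rw [cBits_length]; exact hl, hsub, ?_⟩
      intro u' hpre hne hsub'
      have hlt : u'.length < Nat.find (hex j) := by
        have hle := hpre.length_le
        rw [cBits_length] at hle
        rcases Nat.lt_or_ge u'.length (Nat.find (hex j)) with h2 | h2
        · exact h2
        · exact absurd (hpre.eq_of_length (by rw [cBits_length]; omega)) hne
      have hu'h : u'.length ≤ h := by omega
      have hpu' : p ∈ seg h u' :=
        seg_anti h hpre (by rw [cBits_length]; exact hl) (mem_seg_cBits h p _ hl hph)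
      rw [eq_canon hu'h hpu'] at hsub'
      exact Nat.find_min (hex j) hlt ⟨hu'h, hsub'⟩
    have hpc : p ∈ seg h (cBits h p (Nat.find (hex j))) := mem_seg_cBits h p _ hl hph
    rcases Nat.le_total (v j).length (cBits h p (Nat.find (hex j))).length with hle | hle
    · exact cp_unique h1.1 h2 h1.2 hpc hle
    · exact (cp_unique h2 h1.1 hpc h1.2 hle).symm
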